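/- Let F be a perfect field of characteristic p > 0, let t be an indeterminate, and let L be a finite extension of F(t) with degree of inseparability p^i. Then L = K·M (compositum), where K = F(t^{p^{-i}}) and M is the maximal subfield of L separable over F(t); in particular, L/K is separable. -/

import Mathlib

open Polynomial IntermediateField Module

/-- A subfield of `RatFunc F` containing all constants and `X` is everything. -/
private lemma ratfunc_subfield_eq_top {F : Type*} [Field F] (T : Subfield (RatFunc F))
    (hC : ∀ c : F, algebraMap (Polynomial F) (RatFunc F) (Polynomial.C c) ∈ T)
    (hX : (RatFunc.X : RatFunc F) ∈ T) : T = ⊤ := by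
  have hpoly : ∀ f : Polynomial F, algebraMap (Polynomial F) (RatFunc F) f ∈ T := by
    intro f
    induction f using Polynomial.induction_on' with
    | add a b ha hb => rw [map_add]; exact add_mem ha hb
    | monomial n c =>
      rw [← Polynomial.C_mul_X_pow_eq_monomial, map_mul, map_pow, RatFunc.algebraMap_X]
      exact mul_mem (hC c) (pow_mem hX n)
  rw [eq_top_iff]
  intro x _
  rw [← RatFunc.num_div_denom x]
  exact div_mem (hpoly _) (hpoly _)

/-- Transport separability back along an (iterated Frobenius style) embedding `φ : L →+* L'`:
if `φ x` is separable over the image subfield `B = φ(algebraMap A L (A))`, then `x` is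
separable over `A`. -/
private lemma isSeparable_of_map_isSeparable {A L L' : Type*} [Field A] [Field L] [Field L']
    [Algebra A L] (φ : L →+* L') (B : Subfield L')
    (hB : ∀ a : A, φ (algebraMap A L a) ∈ B)
    (hB' : ∀ b : B, ∃ a : A, φ (algebraMap A L a) = (b : L'))
    (x : L) (hsep : IsSeparable B (φ x)) : IsSeparable A x := by
  set ψ : A →+* L' := φ.comp (algebraMap A L) with hψ
  let ψ' : A →+* B := ψ.codRestrict B.toSubring hB
  have hψ'inj : Function.Injective ψ' := fun a b hab => ψ.injective congr($(hab).1)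
  have hψ'surj : Function.Surjective ψ' := fun b => by
    obtain ⟨a, ha⟩ := hB' b
    exact ⟨a, Subtype.ext ha⟩
  let e : A ≃+* B := RingEquiv.ofBijective ψ' ⟨hψ'inj, hψ'surj⟩
  have he : ∀ a : A, ((e a : B) : L') = ψ a := fun a => rfl
  have hg : (minpoly (↥B) (φ x)).Separable := hsep
  have hint : IsIntegral (↥B) (φ x) := by
    rw [← minpoly.ne_zero_iff]
    exact hg.ne_zero
  set g' : Polynomial A := (minpoly (↥B) (φ x)).map e.symm.toRingHom with hg'def
  have hcomp : (ψ.comp e.symm.toRingHom) = algebraMap (↥B) L' := by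
    ext b
    have : e (e.symm b) = b := e.apply_symm_apply b
    calc ψ (e.symm b) = ((e (e.symm b) : B) : L') := (he _).symm
      _ = (b : L') := by rw [this]
      _ = algebraMap (↥B) L' b := rfl
  have haev : Polynomial.aeval x g' = 0 := by
    apply φ.injective
    rw [map_zero]
    calc φ (Polynomial.aeval x g')
        = Polynomial.eval₂ (φ.comp (algebraMap A L)) (φ x) g' := by
          rw [Polynomial.aeval_def, Polynomial.hom_eval₂]
      _ = Polynomial.eval₂ (ψ.comp e.symm.toRingHom) (φ x) (minpoly (↥B) (φ x)) := by
          rw [hg'def, Polynomial.eval₂_map, hψ]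
      _ = Polynomial.aeval (φ x) (minpoly (↥B) (φ x)) := by
          rw [hcomp, Polynomial.aeval_def]
      _ = 0 := minpoly.aeval _ _
  have hmonic : g'.Monic := (minpoly.monic hint).map _
  have hsepg' : g'.Separable := hg.map
  exact hsepg'.of_dvd (minpoly.dvd A x haev)

set_option maxHeartbeats 2000000 in
set_option synthInstance.maxHeartbeats 400000 in
/-- **Cohen–Odoni, Lemma 1.1.** Let `F` be a perfect field of characteristic `p ≠ 0` and let
`L` be a finite extension of `F(t)` with degree of inseparability `p^i`. Then `L = K·M`, where
`K = F(t^{p^{-i}})` (i.e. `K` is obtained by adjoining a `p^i`-th root `s` of `t` inside `L`)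
and `M` is the maximal subfield of `L` separable over `F(t)`; in particular `L/K` is
separable. -/
theorem reduce_to_separable (F : Type*) [Field F] [PerfectField F] (p : ℕ) (hp : p.Prime)
    [CharP F p] (L : Type*) [Field L] [Algebra (RatFunc F) L]
    [FiniteDimensional (RatFunc F) L] (i : ℕ)
    (hinsep : Field.finInsepDegree (RatFunc F) L = p ^ i) :
    ∃ s : L, s ^ p ^ i = algebraMap (RatFunc F) L RatFunc.X ∧
      IntermediateField.adjoin (RatFunc F) {s} ⊔ separableClosure (RatFunc F) L = ⊤ ∧
      Algebra.IsSeparable (IntermediateField.adjoin (RatFunc F) {s}) L := by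
  classical
  haveI : CharP (RatFunc F) p := charP_of_injective_algebraMap (algebraMap F (RatFunc F)).injective p
  haveI : CharP L p := charP_of_injective_algebraMap (algebraMap (RatFunc F) L).injective p
  haveI : ExpChar (RatFunc F) p := .prime hp
  haveI : ExpChar L p := .prime hp
  haveI : ExpChar F p := .prime hp
  have hp0 : p ≠ 0 := hp.ne_zero
  set ι : (RatFunc F) →+* L := algebraMap (RatFunc F) L with hι
  set φ : L →+* L := iterateFrobenius L p i with hφ
  have hφdef : ∀ x : L, φ x = x ^ p ^ i := fun x => iterateFrobenius_def p i x
  set M := separableClosure (RatFunc F) L with hM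
  haveI : Algebra.IsAlgebraic (RatFunc F) L := Algebra.IsAlgebraic.of_finite (RatFunc F) L
  haveI : IsPurelyInseparable (↥M) L := separableClosure.isPurelyInseparable (RatFunc F) L
  haveI : FiniteDimensional (↥M) L := FiniteDimensional.right (RatFunc F) (↥M) L
  have hML : Module.finrank (↥M) L = p ^ i := hinsep
  -- Step A : every `p^i`-th power lands in `M`.
  have hpowM : ∀ x : L, x ^ p ^ i ∈ M := by
    intro x
    haveI : ExpChar (↥M) p := expChar_of_injective_algebraMap (algebraMap (RatFunc F) (↥M)).injective p
    obtain ⟨n, y, hmin⟩ := IsPurelyInseparable.minpoly_eq_X_pow_sub_C (↥M) p x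
    have hint : IsIntegral (↥M) x := Algebra.IsIntegral.isIntegral x
    have hdeg : Module.finrank (↥M) (↥(IntermediateField.adjoin (↥M) {x})) = p ^ n := by
      rw [IntermediateField.adjoin.finrank hint, hmin, Polynomial.natDegree_X_pow_sub_C]
    have hdvd : p ^ n ∣ p ^ i := by
      rw [← hML, ← hdeg]
      exact ⟨Module.finrank (↥(IntermediateField.adjoin (↥M) {x})) L,
        (Module.finrank_mul_finrank (↥M) (↥(IntermediateField.adjoin (↥M) {x})) L).symm⟩
    have hn : n ≤ i := (Nat.pow_dvd_pow_iff_le_right hp.one_lt).mp hdvd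
    have hxn : x ^ p ^ n = algebraMap (↥M) L y := by
      have h0 := minpoly.aeval (↥M) x
      rw [hmin] at h0
      simp only [map_sub, Polynomial.aeval_X_pow, Polynomial.aeval_C, sub_eq_zero] at h0
      exact h0
    have : x ^ p ^ i = (x ^ p ^ n) ^ p ^ (i - n) := by
      rw [← pow_mul, ← pow_add, Nat.add_sub_cancel' hn]
    rw [this, hxn]
    exact pow_mem y.2 _
  -- the chain of subfields `(RatFunc F)^{p^k}` in `(RatFunc F)` and its degrees
  set ψ : ℕ → ((RatFunc F) →+* (RatFunc F)) := fun k => iterateFrobenius (RatFunc F) p k with hψ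
  set S : ℕ → Subfield (RatFunc F) := fun k => (⊤ : Subfield (RatFunc F)).map (ψ k) with hS
  have hS0 : S 0 = ⊤ := by
    ext x
    simp [hS, hψ, iterateFrobenius_def, frobenius_def]
  have hSmap : ∀ k, (S 1).map (ψ k) = S (k + 1) := by
    intro k
    simp only [hS]
    rw [Subfield.map_map]
    congr 1
    ext x
    simp only [RingHom.comp_apply, hψ, iterateFrobenius_def]
    rw [← pow_mul, pow_one, ← pow_succ']
  have hSle : ∀ k, S (k + 1) ≤ S k := by
    intro k
    rw [← hSmap k]
    rintro _ ⟨y, hy, rfl⟩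
    exact ⟨y, trivial, rfl⟩
  -- X is not a p-th power
  have hXnot : (RatFunc.X : (RatFunc F)) ∉ S 1 := by
    rintro ⟨c, -, hc⟩
    have hc' : c ^ p = RatFunc.X := by
      rw [← hc]; simp [hψ, iterateFrobenius_def, frobenius_def, pow_one]
    have hcne : c ≠ 0 := by
      rintro rfl
      exact RatFunc.X_ne_zero (by simpa [zero_pow hp0] using hc'.symm)
    have hpowdeg : ∀ (n : ℕ) (d : (RatFunc F)), d ≠ 0 →
        RatFunc.intDegree (d ^ n) = n * RatFunc.intDegree d := by
      intro n d hd
      induction n with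
      | zero => simp [RatFunc.intDegree_one]
      | succ n ih =>
        rw [pow_succ, RatFunc.intDegree_mul (pow_ne_zero _ hd) hd, ih]
        push_cast; ring
    have hdeg := congrArg RatFunc.intDegree hc'
    rw [RatFunc.intDegree_X, hpowdeg p c hcne] at hdeg
    have hdvd : (p : ℤ) ∣ 1 := ⟨RatFunc.intDegree c, hdeg.symm⟩
    have hple : (p : ℤ) ≤ 1 := Int.le_of_dvd one_pos hdvd
    have : (2 : ℤ) ≤ (p : ℤ) := by exact_mod_cast hp.two_le
    omega
  -- [(RatFunc F) : (RatFunc F)^p] = p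
  have hbase : Subfield.relfinrank (S 1) ⊤ = p := by
    have haX : (RatFunc.X : (RatFunc F)) ^ p ∈ S 1 :=
      ⟨RatFunc.X, trivial, by simp [hψ, iterateFrobenius_def, frobenius_def]⟩
    set a : ↥(S 1) := ⟨RatFunc.X ^ p, haX⟩ with ha
    have hirr : Irreducible (Polynomial.X ^ p - Polynomial.C a) := by
      apply X_pow_sub_C_irreducible_of_prime hp
      intro b hb
      apply hXnot
      have hbp : (b : (RatFunc F)) ^ p = RatFunc.X ^ p := by
        have := congrArg Subtype.val hb
        push_cast at this
        simpa [ha] using this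
      have hbX : (b : (RatFunc F)) = RatFunc.X :=
        frobenius_inj (RatFunc F) p (by simpa [frobenius_def] using hbp)
      exact hbX ▸ b.2
    have hmono : (Polynomial.X ^ p - Polynomial.C a).Monic :=
      Polynomial.monic_X_pow_sub_C a hp0
    have haev : Polynomial.aeval (RatFunc.X : (RatFunc F)) (Polynomial.X ^ p - Polynomial.C a) = 0 := by
      simp only [map_sub, Polynomial.aeval_X_pow, Polynomial.aeval_C]
      have : algebraMap (↥(S 1)) (RatFunc F) a = RatFunc.X ^ p := rfl
      rw [this, sub_self]
    have hmin : minpoly (↥(S 1)) (RatFunc.X : (RatFunc F)) = Polynomial.X ^ p - Polynomial.C a :=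
      (minpoly.eq_of_irreducible_of_monic hirr haev hmono).symm
    have hint : IsIntegral (↥(S 1)) (RatFunc.X : (RatFunc F)) := ⟨_, hmono, haev⟩
    have hadj : IntermediateField.adjoin (↥(S 1)) {(RatFunc.X : (RatFunc F))} = ⊤ := by
      have hsub := ratfunc_subfield_eq_top
        (IntermediateField.adjoin (↥(S 1)) {(RatFunc.X : (RatFunc F))}).toSubfield ?_ ?_
      · rw [eq_top_iff]
        intro z _
        have : z ∈ (IntermediateField.adjoin (↥(S 1)) {(RatFunc.X : (RatFunc F))}).toSubfield := by
          rw [hsub]; trivial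
        exact this
      · intro c
        obtain ⟨d, hd⟩ := surjective_frobenius F p c
        have hmem : algebraMap (Polynomial F) (RatFunc F) (Polynomial.C c) ∈ S 1 := by
          refine ⟨algebraMap (Polynomial F) (RatFunc F) (Polynomial.C d), trivial, ?_⟩
          simp only [hψ, iterateFrobenius_def, pow_one]
          rw [← map_pow, ← map_pow]
          congr 1
          rw [← hd, frobenius_def]
        exact (IntermediateField.adjoin (↥(S 1)) {(RatFunc.X : (RatFunc F))}).algebraMap_mem
          (⟨_, hmem⟩ : ↥(S 1))
      · exact IntermediateField.subset_adjoin _ _ rfl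
    have hfr : Module.finrank (↥(S 1)) (RatFunc F) = p := by
      have h1 : Module.finrank (↥(S 1))
          (↥(IntermediateField.adjoin (↥(S 1)) {(RatFunc.X : (RatFunc F))})) = p := by
        rw [IntermediateField.adjoin.finrank hint, hmin, Polynomial.natDegree_X_pow_sub_C]
      rw [hadj] at h1
      rwa [IntermediateField.finrank_top'] at h1
    rw [Subfield.relfinrank_top_right]
    exact hfr
  -- [(RatFunc F) : (RatFunc F)^{p^k}] = p^k
  have hSrank : ∀ k, Subfield.relfinrank (S k) ⊤ = p ^ k := by
    intro k
    induction k with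
    | zero => rw [hS0, pow_zero]; exact Subfield.relfinrank_self ⊤
    | succ k ih =>
      have h1 : Subfield.relfinrank (S (k + 1)) (S k) = p := by
        have h2 := Subfield.relfinrank_map_map (S 1) (⊤ : Subfield (RatFunc F)) (ψ k)
        rw [hSmap k] at h2
        have h3 : (⊤ : Subfield (RatFunc F)).map (ψ k) = S k := rfl
        rw [h3] at h2
        rw [h2]; exact hbase
      rw [← Subfield.relfinrank_mul_relfinrank (hSle k) le_top, h1, ih, pow_succ']
  -- subfields of L
  set E0 : Subfield L := (⊤ : Subfield (RatFunc F)).map ι with hE0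
  set Lf : Subfield L := (⊤ : Subfield L).map φ with hLf
  set A0 : Subfield L := E0.map φ with hA0
  set Mf : Subfield L := M.toSubfield with hMf
  have hA0E0 : A0 ≤ E0 := by
    rintro _ ⟨_, ⟨r, -, rfl⟩, rfl⟩
    exact ⟨r ^ p ^ i, trivial, by rw [map_pow, hφdef]⟩
  have hA0Lf : A0 ≤ Lf := by
    rintro _ ⟨x, -, rfl⟩
    exact ⟨x, trivial, rfl⟩
  have hLfMf : Lf ≤ Mf := by
    rintro _ ⟨x, -, rfl⟩
    have : φ x = x ^ p ^ i := hφdef x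
    rw [this]
    exact hpowM x
  have hE0Mf : E0 ≤ Mf := by
    rintro _ ⟨r, -, rfl⟩
    exact M.algebraMap_mem r
  have hA0eq : (S i).map ι = A0 := by
    simp only [hS, hA0, hE0]
    rw [Subfield.map_map, Subfield.map_map]
    congr 1
    ext r
    simp only [RingHom.comp_apply, hψ, iterateFrobenius_def, map_pow, hφdef]
  have h1 : Subfield.relfinrank A0 E0 = p ^ i := by
    have h2 := Subfield.relfinrank_map_map (S i) (⊤ : Subfield (RatFunc F)) ι
    rw [hA0eq] at h2
    have h3 : (⊤ : Subfield (RatFunc F)).map ι = E0 := rfl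
    rw [h3] at h2
    rw [h2]; exact hSrank i
  have h2 : Subfield.relfinrank A0 Lf = Subfield.relfinrank E0 ⊤ := by
    have h4 := Subfield.relfinrank_map_map E0 (⊤ : Subfield L) φ
    have h5 : E0.map φ = A0 := rfl
    have h6 : (⊤ : Subfield L).map φ = Lf := rfl
    rw [h5, h6] at h4
    exact h4
  let ι' : (RatFunc F) →+* ↥E0 := ι.codRestrict E0.toSubring (fun r => ⟨r, trivial, rfl⟩)
  have hι'surj : Function.Surjective ι' := by
    rintro ⟨_, r, -, rfl⟩
    exact ⟨r, rfl⟩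
  have hι'inj : Function.Injective ι' := fun a b hab => ι.injective congr($(hab).1)
  let e₁ : (RatFunc F) ≃+* ↥E0 := RingEquiv.ofBijective ι' ⟨hι'inj, hι'surj⟩
  have he₁ : ∀ r : (RatFunc F), ((e₁ r : ↥E0) : L) = ι r := fun r => rfl
  have hcompat : (algebraMap (↥E0) L).comp (e₁ : (RatFunc F) →+* ↥E0) =
      (RingEquiv.refl L : L →+* L).comp (algebraMap (RatFunc F) L) := by
    ext r; exact he₁ r
  have hn : Subfield.relfinrank E0 (⊤ : Subfield L) ≠ 0 := by
    rw [Subfield.relfinrank_top_right]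
    have hrank : Module.rank (RatFunc F) L = Module.rank (↥E0) L :=
      Algebra.rank_eq_of_equiv_equiv (e₁ : (RatFunc F) ≃+* ↥E0) (RingEquiv.refl L) hcompat
    have hfr : Module.finrank (↥E0) L = Module.finrank (RatFunc F) L := by
      simp only [Module.finrank, hrank]
    rw [hfr]
    exact Module.finrank_pos.ne'
  have h3 : Subfield.relfinrank Lf (⊤ : Subfield L) = p ^ i := by
    have c1 := Subfield.relfinrank_mul_relfinrank hA0Lf (le_top : Lf ≤ ⊤)
    have c2 := Subfield.relfinrank_mul_relfinrank hA0E0 (le_top : E0 ≤ ⊤)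
    rw [h2] at c1
    rw [h1] at c2
    have c3 : Subfield.relfinrank E0 ⊤ * Subfield.relfinrank Lf ⊤ =
        Subfield.relfinrank E0 ⊤ * p ^ i := by
      rw [c1, ← c2]; ring
    exact Nat.eq_of_mul_eq_mul_left (Nat.pos_of_ne_zero hn) c3
  have hMftop : Subfield.relfinrank Mf (⊤ : Subfield L) = p ^ i := by
    rw [Subfield.relfinrank_top_right]
    exact hML
  have hMfLf : Mf ≤ Lf := by
    have hc := Subfield.relfinrank_mul_relfinrank hLfMf (le_top : Mf ≤ ⊤)
    rw [hMftop, h3] at hc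
    have hone : Subfield.relfinrank Lf Mf = 1 := by
      have hpi : 0 < p ^ i := Nat.pow_pos hp.pos
      have := hc.trans (one_mul (p ^ i)).symm
      exact Nat.eq_of_mul_eq_mul_right hpi this
    rw [Subfield.relfinrank_eq_finrank_of_le hLfMf,
      IntermediateField.finrank_eq_one_iff] at hone
    intro x hx
    have hxmem : x ∈ Subfield.extendScalars hLfMf := hx
    rw [hone, IntermediateField.mem_bot] at hxmem
    obtain ⟨y, rfl⟩ := hxmem
    exact y.2
  -- extract the root s
  have hXL : ι RatFunc.X ∈ Lf := hMfLf (hE0Mf ⟨RatFunc.X, trivial, rfl⟩)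
  obtain ⟨s, -, hs⟩ := hXL
  have hs' : s ^ p ^ i = ι RatFunc.X := by rw [← hs, hφdef]
  refine ⟨s, hs', ?_⟩
  set K := IntermediateField.adjoin (RatFunc F) {s} with hK
  set K' : Subfield L := K.toSubfield.map φ with hK'
  have hsK : s ∈ K := IntermediateField.mem_adjoin_simple_self (RatFunc F) s
  -- E0 ≤ K'
  have hE0K' : E0 ≤ K' := by
    have hcomap : K'.comap ι = ⊤ := by
      apply ratfunc_subfield_eq_top
      · intro c
        obtain ⟨d, hd⟩ : ∃ d : F, d ^ p ^ i = c := by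
          refine ⟨(iterateFrobeniusEquiv F p i).symm c, ?_⟩
          have := (iterateFrobeniusEquiv F p i).apply_symm_apply c
          rwa [iterateFrobeniusEquiv_def] at this
        have hmem : ι (algebraMap (Polynomial F) (RatFunc F) (Polynomial.C c)) ∈ K' := by
          refine ⟨ι (algebraMap (Polynomial F) (RatFunc F) (Polynomial.C d)), ?_, ?_⟩
          · exact K.algebraMap_mem _
          · rw [hφdef, ← map_pow, ← map_pow, ← map_pow]
            congr 2
            rw [← hd]
          -- φ (ι (C d)) = (ι (C d))^{p^i} = ι ((C d)^{p^i}) = ι (C (d^{p^i})) = ι (C c)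
        exact hmem
      · show ι RatFunc.X ∈ K'
        exact ⟨s, hsK, hs⟩
    rintro _ ⟨r, -, rfl⟩
    have : r ∈ K'.comap ι := by rw [hcomap]; trivial
    exact this
  -- separability of L over K
  have hsepK : ∀ x : L, IsSeparable (↥K) x := by
    intro x
    have hy : IsSeparable (RatFunc F) (x ^ p ^ i) := mem_separableClosure_iff.mp (hpowM x)
    have hyE0 : IsSeparable (↥E0) (x ^ p ^ i) := by
      have := IsSeparable.of_equiv_equiv (e₁ : (RatFunc F) ≃+* ↥E0) (RingEquiv.refl L) hcompat hy
      simpa using this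
    have hyK' : IsSeparable (↥K') (x ^ p ^ i) := by
      letI : Algebra (↥E0) (↥K') := (Subfield.inclusion hE0K').toAlgebra
      haveI : IsScalarTower (↥E0) (↥K') L := IsScalarTower.of_algebraMap_eq' rfl
      exact IsSeparable.tower_top (↥K') hyE0
    refine isSeparable_of_map_isSeparable φ K' ?_ ?_ x ?_
    · intro a
      exact ⟨(a : L), a.2, rfl⟩
    · rintro ⟨b, z, hz, rfl⟩
      exact ⟨⟨z, hz⟩, rfl⟩
    · rw [hφdef]
      exact hyK'
  haveI hsepKL : Algebra.IsSeparable (↥K) L := ⟨hsepK⟩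
  refine ⟨?_, hsepKL⟩
  -- K ⊔ M = ⊤
  rw [eq_top_iff]
  intro x _
  letI : Algebra (↥M) (↥(K ⊔ M)) :=
    (IntermediateField.inclusion (le_sup_right : M ≤ K ⊔ M)).toAlgebra
  haveI : IsScalarTower (↥M) (↥(K ⊔ M)) L := IsScalarTower.of_algebraMap_eq' rfl
  haveI : IsPurelyInseparable (↥(K ⊔ M)) L := IsPurelyInseparable.tower_top (↥M) (↥(K ⊔ M)) L
  letI : Algebra (↥K) (↥(K ⊔ M)) :=
    (IntermediateField.inclusion (le_sup_left : K ≤ K ⊔ M)).toAlgebra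
  haveI : IsScalarTower (↥K) (↥(K ⊔ M)) L := IsScalarTower.of_algebraMap_eq' rfl
  haveI : Algebra.IsSeparable (↥(K ⊔ M)) L :=
    Algebra.isSeparable_tower_top_of_isSeparable (↥K) (↥(K ⊔ M)) L
  obtain ⟨y, rfl⟩ := IsPurelyInseparable.surjective_algebraMap_of_isSeparable (↥(K ⊔ M)) L x
  exact y.2
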